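/- A finite dataset D = {(x^k, B^k)}_{k∈K} is naively rationalizable if and only if it satisfies both N-SARP and Condition 1. -/

import Mathlib

def maxSet {X : Type} (S : Set X) (pref : X → X → Prop) : Set X :=
  {x | x ∈ S ∧ ∀ y ∈ S, pref x y}

def WeakOrder {X : Type} (pref : X → X → Prop) : Prop :=
  (∀ a b, pref a b ∨ pref b a) ∧ Transitive pref

def sec1 {X₁ X₂ : Type} (B : Set (X₁ × X₂)) (a : X₁) : Set (X₁ × X₂) :=
  {y ∈ B | y.1 = a}

def sec2 {X₁ X₂ : Type} (B : Set (X₁ × X₂)) (b : X₂) : Set (X₁ × X₂) :=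
  {y ∈ B | y.2 = b}

def NSARP {K X₁ X₂ : Type} (x : K → X₁ × X₂) (B : K → Set (X₁ × X₂)) : Prop :=
  ¬ ∃ (L : ℕ) (k : Fin (L + 1) → K), ∀ l : Fin (L + 1),
      x (k l) ≠ x (k (l + 1)) ∧ x (k l) ∈ sec1 (B (k (l + 1))) (x (k (l + 1))).1

def NNSARP {K X₁ X₂ : Type} (x : K → X₁ × X₂) (B : K → Set (X₁ × X₂)) : Prop :=
  ¬ ∃ (L : ℕ) (k : Fin (L + 1) → K), ∀ l : Fin (L + 1),
      x (k l) ≠ x (k (l + 1)) ∧ x (k l) ∈ sec2 (B (k (l + 1))) (x (k (l + 1))).2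

def Cond1 {K X₁ X₂ : Type} (x : K → X₁ × X₂) (B : K → Set (X₁ × X₂)) : Prop :=
  ∀ S : Set K, S.Nonempty →
    ¬ (⋃ k ∈ S, sec1 (B k) (x k).1) ⊆ ⋃ k ∈ S, (B k \ sec1 (B k) (x k).1)

def Cond2 {K X₁ X₂ : Type} (x : K → X₁ × X₂) (B : K → Set (X₁ × X₂)) : Prop :=
  ¬ ∃ (L : ℕ) (k : Fin (L + 1) → K), ∀ l : Fin (L + 1),
      x (k l) ≠ x (k (l + 1)) ∧ x (k l) ∈ sec1 (B (k (l + 1))) (x (k l)).1 ∧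
      sec1 (B (k (l + 1))) (x (k l)).1 ⊆ sec1 (B (k l)) (x (k l)).1

def NaiveRat {K X₁ X₂ : Type} (x : K → X₁ × X₂) (B : K → Set (X₁ × X₂)) : Prop :=
  ∃ p1 p2 : X₁ × X₂ → X₁ × X₂ → Prop, WeakOrder p1 ∧ WeakOrder p2 ∧
    ∀ k, (∃ z, maxSet (B k) p1 = {z} ∧ z ∈ sec1 (B k) (x k).1) ∧
      maxSet (sec1 (B k) (x k).1) p2 = {x k}

def NaiveNashRat {K X₁ X₂ : Type} (x : K → X₁ × X₂) (B : K → Set (X₁ × X₂)) : Prop :=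
  ∃ p1 p2 : X₁ × X₂ → X₁ × X₂ → Prop, WeakOrder p1 ∧ WeakOrder p2 ∧
    ∀ k, x k ∈ maxSet (sec2 (B k) (x k).2) p1 ∧
      maxSet (sec1 (B k) (x k).1) p2 = {x k}

def StrictNaiveNashRat {K X₁ X₂ : Type} (x : K → X₁ × X₂) (B : K → Set (X₁ × X₂)) : Prop :=
  ∃ p1 p2 : X₁ × X₂ → X₁ × X₂ → Prop, WeakOrder p1 ∧ WeakOrder p2 ∧
    ∀ k, maxSet (sec2 (B k) (x k).2) p1 = {x k} ∧
      maxSet (sec1 (B k) (x k).1) p2 = {x k}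

def SophRat {K X₁ X₂ : Type} (x : K → X₁ × X₂) (B : K → Set (X₁ × X₂)) : Prop :=
  ∃ p1 p2 : X₁ × X₂ → X₁ × X₂ → Prop, WeakOrder p1 ∧ WeakOrder p2 ∧
    ∀ k, maxSet (⋃ a ∈ Prod.fst '' B k, maxSet (sec1 (B k) a) p2) p1 = {x k}


private theorem exists_pref_max {α β : Type} (p : β → β → Prop)
    (htot : ∀ a b, p a b ∨ p b a) (htrans : Transitive p)
    (f : α → β) : ∀ T : Finset α, T.Nonempty →
    ∃ a ∈ T, ∀ b ∈ T, p (f a) (f b) := by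
  classical
  intro T
  induction T using Finset.induction_on with
  | empty => intro h; exact absurd h (by simp)
  | insert _ _ hnot ih =>
    rename_i a s
    intro _
    by_cases hs : s.Nonempty
    · obtain ⟨m, hm, hmax⟩ := ih hs
      rcases htot (f a) (f m) with h | h
      · refine ⟨a, Finset.mem_insert_self _ _, ?_⟩
        intro b hb; rcases Finset.mem_insert.1 hb with rfl | hb
        · exact (htot (f b) (f b)).elim id id
        · exact htrans h (hmax b hb)
      · refine ⟨m, Finset.mem_insert_of_mem hm, ?_⟩
        intro b hb; rcases Finset.mem_insert.1 hb with rfl | hb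
        · exact h
        · exact hmax b hb
    · have hse : s = ∅ := Finset.not_nonempty_iff_eq_empty.1 hs
      subst hse
      refine ⟨a, by simp, ?_⟩
      intro b hb; simp at hb; subst hb
      exact (htot (f b) (f b)).elim id id

private theorem transgen_chain {α : Type} {P : α → α → Prop} {a b : α}
    (h : Relation.TransGen P a b) :
    ∃ (n : ℕ) (f : ℕ → α), f 0 = a ∧ f (n+1) = b ∧ ∀ i ≤ n, P (f i) (f (i+1)) := by
  induction h with
  | @single c hc =>
    refine ⟨0, fun i => if i = 0 then a else c, by simp, by simp, ?_⟩
    intro i hi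
    interval_cases i
    simpa using hc
  | @tail b' c' hbc hcd ih =>
    obtain ⟨n, f, h0, hn, hstep⟩ := ih
    refine ⟨n+1, fun i => if i ≤ n+1 then f i else c', by simp [h0], by simp, ?_⟩
    intro i hi
    rcases Nat.lt_or_ge i (n+1) with h | h
    · have : i ≤ n := by omega
      simpa [Nat.le_of_lt h, show i ≤ n+1 by omega, show i + 1 ≤ n + 1 by omega] using hstep i this
    · have : i = n + 1 := by omega
      subst this
      simpa [hn] using hcd

private def listVal {α : Type} [DecidableEq α] : List α → α → ℕ
  | [], _ => 0
  | a :: t, w => if w = a then t.length + 1 else listVal t w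

private theorem listVal_le {α : Type} [DecidableEq α] (l : List α) (w : α) :
    listVal l w ≤ l.length := by
  induction l with
  | nil => simp [listVal]
  | cons a t ih =>
    simp only [listVal, List.length_cons]
    split
    · omega
    · omega

private theorem listVal_append {α : Type} [DecidableEq α] (l₁ rest : List α) (w : α)
    (h : w ∉ l₁) : listVal (l₁ ++ rest) w = listVal rest w := by
  induction l₁ with
  | nil => simp
  | cons a t ih =>
    simp only [List.cons_append, listVal]
    rw [if_neg (by simp at h; exact h.1)]
    exact ih (by simp at h; exact h.2)

private theorem listVal_cons_self {α : Type} [DecidableEq α] (z : α) (l : List α) :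
    listVal (z :: l) z = l.length + 1 := by
  simp [listVal]

private theorem listVal_cons_ne {α : Type} [DecidableEq α] {z w : α} (l : List α)
    (h : w ≠ z) : listVal (z :: l) w = listVal l w := by
  simp [listVal, h]

private theorem cond1_list {K X₁ X₂ : Type} [Fintype K] (x : K → X₁ × X₂) (B : K → Set (X₁ × X₂))
    (hC : Cond1 x B) :
    ∀ S : Finset K, ∃ ys : List (X₁ × X₂),
      ∀ k ∈ S, ∃ l₁ w l₂, ys = l₁ ++ w :: l₂ ∧ w ∈ sec1 (B k) (x k).1 ∧ ∀ v ∈ l₁, v ∉ B k := by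
  classical
  intro S
  induction S using Finset.strongInduction with
  | _ S ih =>
    rcases S.eq_empty_or_nonempty with rfl | hS
    · exact ⟨[], by simp⟩
    · have hns := hC (↑S) (by exact_mod_cast hS)
      obtain ⟨y, hy1, hy2⟩ := Set.not_subset.1 hns
      obtain ⟨k0, hk0, hy0⟩ := Set.mem_iUnion₂.mp hy1
      have hk0' : k0 ∈ S := by exact_mod_cast hk0
      have hysec : ∀ k ∈ S, y ∈ B k → y ∈ sec1 (B k) (x k).1 := by
        intro k hk hyB
        by_contra h
        exact hy2 (Set.mem_biUnion (by exact_mod_cast hk) ⟨hyB, h⟩)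
      have hss : S.filter (fun k => y ∉ B k) ⊂ S := by
        refine Finset.filter_ssubset.2 ⟨k0, hk0', ?_⟩
        simp only [not_not]
        exact hy0.1
      obtain ⟨ys, hgood⟩ := ih _ hss
      refine ⟨y :: ys, ?_⟩
      intro k hk
      by_cases hyk : y ∈ B k
      · exact ⟨[], y, ys, rfl, hysec k hk hyk, by simp⟩
      · have hk' : k ∈ S.filter (fun k => y ∉ B k) := Finset.mem_filter.2 ⟨hk, hyk⟩
        obtain ⟨l₁, w, l₂, hys, hw, hl₁⟩ := hgood k hk'
        refine ⟨y :: l₁, w, l₂, by rw [hys]; rfl, hw, ?_⟩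
        intro v hv
        rcases List.mem_cons.1 hv with rfl | hv
        · exact hyk
        · exact hl₁ v hv

private theorem exists_u1 {K X₁ X₂ : Type} [Fintype K] (x : K → X₁ × X₂) (B : K → Set (X₁ × X₂))
    (hC : Cond1 x B) :
    ∃ u1 : X₁ × X₂ → ℕ, ∀ k, ∃ z, maxSet (B k) (fun a b => u1 b ≤ u1 a) = {z} ∧
      z ∈ sec1 (B k) (x k).1 := by
  classical
  obtain ⟨ys, hgood⟩ := cond1_list x B hC Finset.univ
  refine ⟨fun w => listVal ys w, ?_⟩
  intro k
  obtain ⟨l₁, z, l₂, hys, hzsec, hl₁⟩ := hgood k (Finset.mem_univ k)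
  have hzB : z ∈ B k := hzsec.1
  have hval : ∀ v ∈ B k, listVal ys v = listVal (z :: l₂) v := by
    intro v hvB
    rw [hys]
    exact listVal_append _ _ _ (fun h => hl₁ v h hvB)
  have hvz : listVal ys z = l₂.length + 1 := by
    rw [hval z hzB, listVal_cons_self]
  refine ⟨z, ?_, hzsec⟩
  ext w
  simp only [maxSet, Set.mem_setOf_eq, Set.mem_singleton_iff]
  constructor
  · rintro ⟨hwB, hwmax⟩
    have h1 := hwmax z hzB
    rw [hvz] at h1
    by_contra hne
    rw [hval w hwB, listVal_cons_ne _ hne] at h1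
    have := listVal_le l₂ w
    omega
  · intro hwz
    rw [hwz]
    refine ⟨hzB, ?_⟩
    intro v hvB
    rw [hvz, hval v hvB]
    have := listVal_le (z :: l₂) v
    simp only [List.length_cons] at this
    omega

private theorem exists_u2 {K X₁ X₂ : Type} [Fintype K] (x : K → X₁ × X₂) (B : K → Set (X₁ × X₂))
    (hmem : ∀ k, x k ∈ B k) (hN : NSARP x B) :
    ∃ u2 : X₁ × X₂ → ℕ, ∀ k,
      maxSet (sec1 (B k) (x k).1) (fun a b => u2 b ≤ u2 a) = {x k} := by
  classical
  set P : X₁ × X₂ → X₁ × X₂ → Prop :=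
    fun a b => a ≠ b ∧ ∃ k, x k = a ∧ b ∈ sec1 (B k) a.1 with hP
  have hirr : ∀ a, ¬ Relation.TransGen P a a := by
    intro a hTC
    obtain ⟨n, f, hf0, hfn, hstep⟩ := transgen_chain hTC
    have hK : Nonempty K := by
      obtain ⟨-, k, -⟩ := hstep 0 (Nat.zero_le n)
      exact ⟨k⟩
    have hsw : ∀ i : ℕ, ∃ k, i ≤ n → (x k = f i ∧
        f (i+1) ∈ sec1 (B k) (f i).1 ∧ f i ≠ f (i+1)) := by
      intro i
      by_cases hi : i ≤ n
      · obtain ⟨hne, k, hxk, hmem'⟩ := hstep i hi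
        exact ⟨k, fun _ => ⟨hxk, hmem', hne⟩⟩
      · exact ⟨Classical.arbitrary K, fun h => absurd h hi⟩
    choose κ hκ using hsw
    refine hN ⟨n, fun l => κ (n - l.val), ?_⟩
    intro l
    show x (κ (n - l.val)) ≠ x (κ (n - ((l+1) : Fin (n+1)).val)) ∧
      x (κ (n - l.val)) ∈ sec1 (B (κ (n - ((l+1) : Fin (n+1)).val)))
        (x (κ (n - ((l+1) : Fin (n+1)).val))).1
    by_cases hl : l = Fin.last n
    · subst hl
      have h1 : ((Fin.last n + 1 : Fin (n+1))).val = 0 := by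
        rw [Fin.last_add_one]; rfl
      rw [h1]
      simp only [Fin.val_last, Nat.sub_self, Nat.sub_zero]
      obtain ⟨e2, e3, e4⟩ := hκ n (le_refl n)
      obtain ⟨e1, -, -⟩ := hκ 0 (Nat.zero_le n)
      have hfa : f (n+1) = f 0 := by rw [hfn, ← hf0]
      rw [hfa] at e3 e4
      constructor
      · rw [e1, e2]; exact fun h => e4 h.symm
      · rw [e1, e2]; exact e3
    · have hlv : l.val < n := by
        have := l.isLt
        have hne : l.val ≠ n := fun h => hl (Fin.ext h)
        omega
      have hsucc : ((l + 1 : Fin (n+1))).val = l.val + 1 := by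
        rw [Fin.val_add_one, if_neg hl]
      rw [hsucc]
      set i : ℕ := n - l.val - 1 with hi
      have hi1 : n - l.val = i + 1 := by omega
      have hi2 : n - (l.val + 1) = i := by omega
      rw [hi1, hi2]
      obtain ⟨e2, e3, e4⟩ := hκ i (by omega)
      obtain ⟨e1, -, -⟩ := hκ (i+1) (by omega)
      constructor
      · rw [e1, e2]; exact fun h => e4 h.symm
      · rw [e1, e2]; exact e3
  have hTfin : ∀ a : X₁ × X₂, ({b ∈ Set.range x | Relation.TransGen P a b}).Finite :=
    fun a => (Set.finite_range x).subset (fun b hb => hb.1)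
  set u2 : X₁ × X₂ → ℕ := fun a =>
    if a ∈ Set.range x then 1 + ({b ∈ Set.range x | Relation.TransGen P a b}).ncard else 0
    with hu2
  have hstrict : ∀ a b, a ∈ Set.range x → P a b → u2 b < u2 a := by
    intro a b ha hab
    by_cases hb : b ∈ Set.range x
    · have hsub : {c ∈ Set.range x | Relation.TransGen P b c} ⊂
          {c ∈ Set.range x | Relation.TransGen P a c} := by
        constructor
        · intro c hc
          exact ⟨hc.1, (Relation.TransGen.single hab).trans hc.2⟩
        · intro hcon
          have hb' : b ∈ {c ∈ Set.range x | Relation.TransGen P a c} :=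
            ⟨hb, Relation.TransGen.single hab⟩
          exact hirr b (hcon hb').2
      have hlt := Set.ncard_lt_ncard hsub (hTfin a)
      rw [hu2]; simp only [if_pos ha, if_pos hb]
      omega
    · rw [hu2]; simp only [if_pos ha, if_neg hb]
      omega
  refine ⟨u2, ?_⟩
  intro k
  have hxsec : x k ∈ sec1 (B k) (x k).1 := ⟨hmem k, rfl⟩
  have hxr : x k ∈ Set.range x := ⟨k, rfl⟩
  ext w
  simp only [maxSet, Set.mem_setOf_eq, Set.mem_singleton_iff]
  constructor
  · rintro ⟨hw, hwmax⟩
    by_contra hne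
    have hPk : P (x k) w := ⟨fun h => hne h.symm, k, rfl, hw⟩
    have h1 := hstrict (x k) w hxr hPk
    have h2 := hwmax (x k) hxsec
    omega
  · rintro rfl
    refine ⟨hxsec, ?_⟩
    intro v hv
    by_cases hvk : v = x k
    · subst hvk; exact le_refl _
    · exact le_of_lt (hstrict (x k) v hxr ⟨fun h => hvk h.symm, k, rfl, hv⟩)

open Fin.NatCast in
theorem naive_rationalizable_iff_NSARP_and_Cond1
    {K X₁ X₂ : Type} [Fintype K]
    (x : K → X₁ × X₂) (B : K → Set (X₁ × X₂)) (hmem : ∀ k, x k ∈ B k) :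
    NaiveRat x B ↔ NSARP x B ∧ Cond1 x B := by
  classical
  constructor
  · rintro ⟨p1, p2, ⟨h1tot, h1tr⟩, ⟨h2tot, h2tr⟩, hk⟩
    constructor
    · rintro ⟨L, k, hcyc⟩
      set g : ℕ → X₁ × X₂ := fun n => x (k ((n : ℕ) : Fin (L+1))) with hg
      have key : ∀ n : ℕ, p2 (g (n+1)) (g n) ∧ ¬ p2 (g n) (g (n+1)) := by
        intro n
        have hc := hcyc ((n : ℕ) : Fin (L+1))
        have hmax := (hk (k (((n : ℕ) : Fin (L+1)) + 1))).2
        have hgs : g (n+1) = x (k (((n : ℕ) : Fin (L+1)) + 1)) := by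
          rw [hg]; simp only; congr 2; push_cast; ring
      -- membership of max
        have hxmax : x (k (((n : ℕ) : Fin (L+1)) + 1)) ∈
            maxSet (sec1 (B (k (((n : ℕ) : Fin (L+1)) + 1))) (x (k (((n : ℕ) : Fin (L+1)) + 1))).1) p2 := by
          rw [hmax]; rfl
        constructor
        · rw [hgs]
          exact hxmax.2 _ hc.2
        · intro hcon
          rw [hgs] at hcon
          have : g n ∈ maxSet (sec1 (B (k (((n : ℕ) : Fin (L+1)) + 1)))
              (x (k (((n : ℕ) : Fin (L+1)) + 1))).1) p2 :=
            ⟨hc.2, fun y hy => h2tr hcon (hxmax.2 y hy)⟩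
          rw [hmax] at this
          exact hc.1 (this ▸ rfl)
      have chain : ∀ m n : ℕ, p2 (g (n + m)) (g n) := by
        intro m
        induction m with
        | zero => intro n; exact (h2tot (g n) (g n)).elim id id
        | succ m ih =>
          intro n
          have h1 := (key (n + m)).1
          exact h2tr (by rw [show n + (m+1) = n + m + 1 by ring]; exact h1) (ih n)
      have hLcyc : g (1 + L) = g 0 := by
        rw [hg]; simp only; congr 2
        have : ((1 + L : ℕ) : Fin (L+1)) = 0 := by
          rw [show (1 + L : ℕ) = L + 1 by ring]
          exact_mod_cast Fin.natCast_self (L+1)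
        rw [this]; norm_num
      have := chain L 1
      rw [hLcyc] at this
      exact (key 0).2 this
    · intro S hS hsub
      have hz : ∀ k, ∃ z, maxSet (B k) p1 = {z} ∧ z ∈ sec1 (B k) (x k).1 :=
        fun k => (hk k).1
      choose z hzeq hzsec using hz
      have hzmax : ∀ k, z k ∈ maxSet (B k) p1 := fun k => by rw [hzeq k]; rfl
      obtain ⟨a, haT, hamax⟩ := exists_pref_max p1 h1tot h1tr z S.toFinite.toFinset
        (by rwa [Set.Finite.toFinset_nonempty])
      have haS : a ∈ S := (Set.Finite.mem_toFinset _).1 haT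
      have hin : z a ∈ ⋃ k ∈ S, sec1 (B k) (x k).1 := Set.mem_biUnion haS (hzsec a)
      obtain ⟨j, hjS, hj⟩ := Set.mem_iUnion₂.1 (hsub hin)
      have h1 : p1 (z a) (z j) := hamax j ((Set.Finite.mem_toFinset _).2 hjS)
      have h2 : z a ∈ maxSet (B j) p1 := ⟨hj.1, fun w hw => h1tr h1 ((hzmax j).2 w hw)⟩
      rw [hzeq j] at h2
      have h3 : z a = z j := h2
      rw [h3] at hj
      exact hj.2 (hzsec j)
  · rintro ⟨hN, hC⟩
    obtain ⟨u1, hu1⟩ := exists_u1 x B hC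
    obtain ⟨u2, hu2⟩ := exists_u2 x B hmem hN
    refine ⟨fun a b => u1 b ≤ u1 a, fun a b => u2 b ≤ u2 a,
      ⟨fun a b => Nat.le_total (u1 b) (u1 a), fun a b c h1 h2 => le_trans h2 h1⟩,
      ⟨fun a b => Nat.le_total (u2 b) (u2 a), fun a b c h1 h2 => le_trans h2 h1⟩, ?_⟩
    intro k
    exact ⟨hu1 k, hu2 k⟩
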